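/- Let w = 2 and let D be a minimal norm representatives digit set modulo τ². Suppose that either p is even and (1/√q + 2/q)²·(q − p²/4 + 1) < 1, or p is odd and (1/√q + 2/q)²·(q − p²/4 + 1/4)²·(q − p²/4)^{−1} < 1. Then D is 2-subadditive. -/

import Mathlib

set_option maxHeartbeats 1600000

open Complex

noncomputable section

/-- The lattice `ℤ[τ] = {a + b·τ : a, b ∈ ℤ}` as a subset of `ℂ`. -/
def Ztau (τ : ℂ) : Set ℂ := {z | ∃ a b : ℤ, z = (a : ℂ) + (b : ℂ) * τ}

/-- `z` is divisible by `τ` in `ℤ[τ]`. -/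
def TauDvd (τ : ℂ) (z : ℂ) : Prop := ∃ y ∈ Ztau τ, z = τ * y

/-- `x` is a minimal norm representative modulo `τ^w`: an element of `ℤ[τ]`,
not divisible by `τ`, of minimal norm in its residue class modulo `τ^w`. -/
def MinNormRep (τ : ℂ) (w : ℕ) (x : ℂ) : Prop :=
  x ∈ Ztau τ ∧ ¬ TauDvd τ x ∧
    ∀ y ∈ Ztau τ, ‖x‖ ≤ ‖x - τ ^ w * y‖

/-- `D` is a minimal norm representatives digit set modulo `τ^w`. -/
def IsMinNormDigitSet (τ : ℂ) (w : ℕ) (D : Set ℂ) : Prop :=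
  D ⊆ Ztau τ ∧ (0 : ℂ) ∈ D ∧ (∀ d ∈ D, d ≠ 0 → MinNormRep τ w d) ∧
    ∀ z ∈ Ztau τ, ¬ TauDvd τ z →
      ∃! d, d ∈ D ∧ ∃ y ∈ Ztau τ, z - d = τ ^ w * y

/-- An expansion: a finitely supported sequence of digits. -/
def IsExpansion (D : Set ℂ) (η : ℕ →₀ ℂ) : Prop := ∀ n, η n ∈ D

/-- The `w`-NAF condition: any two distinct nonzero digits have indices at
distance at least `w`. -/
def IsWNAF (w : ℕ) (η : ℕ →₀ ℂ) : Prop :=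
  ∀ m n : ℕ, m ≠ n → η m ≠ 0 → η n ≠ 0 → (w : ℤ) ≤ |(m : ℤ) - (n : ℤ)|

/-- The value of an expansion in base `τ`: `∑ η_n · τ^n`. -/
def evalue (τ : ℂ) (η : ℕ →₀ ℂ) : ℂ := η.sum fun n d => d * τ ^ n

/-- The weight of an expansion: the number of nonzero digits. -/
def eweight (η : ℕ →₀ ℂ) : ℕ := η.support.card

/-- A multi-expansion over the digit set `D`: a finite multiset of pairs
`(d, n)` with `d ∈ D` nonzero. -/
def IsMultiExpansion (D : Set ℂ) (μ : Multiset (ℂ × ℕ)) : Prop :=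
  ∀ x ∈ μ, x.1 ∈ D ∧ x.1 ≠ 0

/-- The value of a multi-expansion in base `τ`: `∑ d · τ^n`. -/
def mvalue (τ : ℂ) (μ : Multiset (ℂ × ℕ)) : ℂ :=
  (μ.map fun x => x.1 * τ ^ x.2).sum

/-- The digit set `D` is `w`-subadditive: the sum of the values of two
singletons has a `w`-NAF-expansion of weight at most `2`. -/
def WSubadditive (τ : ℂ) (w : ℕ) (D : Set ℂ) : Prop :=
  ∀ c ∈ D, ∀ d ∈ D, c ≠ 0 → d ≠ 0 → ∀ m n : ℕ,
    ∃ η : ℕ →₀ ℂ, IsExpansion D η ∧ IsWNAF w η ∧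
      evalue τ η = τ ^ m * c + τ ^ n * d ∧ eweight η ≤ 2

section AuxBasics

variable {p q : ℤ} {τ : ℂ}

lemma ztau_zero : (0:ℂ) ∈ Ztau τ := ⟨0, 0, by simp⟩

lemma ztau_add {z w : ℂ} (hz : z ∈ Ztau τ) (hw : w ∈ Ztau τ) : z + w ∈ Ztau τ := by
  obtain ⟨a, b, rfl⟩ := hz; obtain ⟨c, d, rfl⟩ := hw
  exact ⟨a + c, b + d, by push_cast; ring⟩

lemma ztau_neg {z : ℂ} (hz : z ∈ Ztau τ) : -z ∈ Ztau τ := by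
  obtain ⟨a, b, rfl⟩ := hz; exact ⟨-a, -b, by push_cast; ring⟩

lemma ztau_sub {z w : ℂ} (hz : z ∈ Ztau τ) (hw : w ∈ Ztau τ) : z - w ∈ Ztau τ := by
  rw [sub_eq_add_neg]; exact ztau_add hz (ztau_neg hw)

lemma tau_sq (hroot : τ ^ 2 - (p : ℂ) * τ + (q : ℂ) = 0) :
    τ ^ 2 = (p : ℂ) * τ - (q : ℂ) := by linear_combination hroot

lemma ztau_tau_mul (hroot : τ ^ 2 - (p : ℂ) * τ + (q : ℂ) = 0)
    {z : ℂ} (hz : z ∈ Ztau τ) : τ * z ∈ Ztau τ := by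
  obtain ⟨a, b, rfl⟩ := hz
  refine ⟨-(b*q), a + b*p, ?_⟩
  push_cast
  linear_combination (b : ℂ) * (tau_sq hroot)

lemma taudvd_zero : TauDvd τ 0 := ⟨0, ztau_zero, by ring⟩

lemma tau_re (hroot : τ ^ 2 - (p : ℂ) * τ + (q : ℂ) = 0) (him : τ.im ≠ 0) :
    τ.re = (p : ℝ) / 2 := by
  have h := congrArg Complex.im hroot
  simp only [Complex.add_im, Complex.sub_im, Complex.mul_im, Complex.intCast_im,
    Complex.intCast_re, Complex.zero_im, pow_two] at h
  have : (2 * τ.re - (p:ℝ)) * τ.im = 0 := by linarith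
  rcases mul_eq_zero.1 this with h' | h'
  · linarith
  · exact absurd h' him

lemma tau_im_sq (hroot : τ ^ 2 - (p : ℂ) * τ + (q : ℂ) = 0) (him : τ.im ≠ 0) :
    τ.im ^ 2 = (q : ℝ) - (p : ℝ) ^ 2 / 4 := by
  have h := congrArg Complex.re hroot
  have hre := tau_re hroot him
  simp [pow_two, Complex.mul_im, Complex.mul_re] at h
  nlinarith [h]

lemma tau_normSq (hroot : τ ^ 2 - (p : ℂ) * τ + (q : ℂ) = 0) (him : τ.im ≠ 0) :
    Complex.normSq τ = (q : ℝ) := by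
  rw [Complex.normSq_apply]
  have h1 := tau_re hroot him
  have h2 := tau_im_sq hroot him
  rw [h1]; nlinarith [h2]

lemma normSq_ztau (p q : ℤ) (τ : ℂ) (hre : τ.re = (p:ℝ)/2)
    (hns : Complex.normSq τ = (q:ℝ)) (a b : ℤ) :
    Complex.normSq ((a:ℂ) + (b:ℂ)*τ) = ((a^2 + a*b*p + b^2*q : ℤ) : ℝ) := by
  rw [Complex.normSq_apply]
  simp only [Complex.add_re, Complex.add_im, Complex.mul_re, Complex.mul_im,
    Complex.intCast_re, Complex.intCast_im]
  have h2 : τ.re * τ.re + τ.im * τ.im = (q:ℝ) := by rw [← Complex.normSq_apply, hns]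
  push_cast
  linear_combination ((b:ℝ)^2) * h2 + 2*(a:ℝ)*(b:ℝ)*hre

lemma one_le_abs_ztau (p q : ℤ) (τ : ℂ) (hre : τ.re = (p:ℝ)/2)
    (hns : Complex.normSq τ = (q:ℝ)) {z : ℂ} (hz : z ∈ Ztau τ) (hz0 : z ≠ 0) :
    1 ≤ ‖z‖ := by
  obtain ⟨a, b, rfl⟩ := hz
  have h := normSq_ztau p q τ hre hns a b
  have hpos : 0 < Complex.normSq ((a:ℂ) + (b:ℂ)*τ) := Complex.normSq_pos.2 hz0
  rw [h] at hpos
  have hint : (0:ℤ) < a^2 + a*b*p + b^2*q := by exact_mod_cast hpos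
  have h1 : 1 ≤ Complex.normSq ((a:ℂ) + (b:ℂ)*τ) := by
    rw [h]; exact_mod_cast hint
  nlinarith [Complex.sq_norm ((a:ℂ) + (b:ℂ)*τ), norm_nonneg ((a:ℂ) + (b:ℂ)*τ)]

lemma abs_le_of_sq {x : ℂ} {B : ℝ} (hB : 0 ≤ B) (h : x.re^2 + x.im^2 ≤ B^2) :
    ‖x‖ ≤ B := by
  rw [Complex.norm_def, Complex.normSq_apply, ← Real.sqrt_sq hB]
  apply Real.sqrt_le_sqrt
  nlinarith

lemma sub_lattice_re (τ z : ℂ) (a b : ℤ) :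
    (z - ((a:ℂ)+(b:ℂ)*τ)).re = z.re - a - b*τ.re := by
  simp [Complex.sub_re, Complex.add_re, Complex.mul_re]; ring

lemma sub_lattice_im (τ z : ℂ) (a b : ℤ) :
    (z - ((a:ℂ)+(b:ℂ)*τ)).im = z.im - b*τ.im := by
  simp [Complex.sub_im, Complex.add_im, Complex.mul_im]

end AuxBasics
lemma cover_min_aux (h t r0 R k : ℝ) (hh0 : 0 < h) (hh : 3/4 ≤ h^2)
    (hRdef : 2*h*R = h^2 + 1/4) (hkdef : 2*h*k = h^2 - 1/4)
    (ht0 : 0 ≤ t) (hth : t ≤ h) (hr0 : 0 ≤ r0) (hr1 : r0 ≤ 1/2) :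
    r0^2 + t^2 ≤ R^2 ∨ (1/2 - r0)^2 + (h - t)^2 ≤ R^2 := by
  have hk0 : 0 < k := by nlinarith
  have hR2 : R^2 = k^2 + 1/4 := by
    have h4 : 4*h^2*(R^2 - k^2 - 1/4) = 0 := by
      linear_combination (2*h*R + h^2 + 1/4)*hRdef - (2*h*k + h^2 - 1/4)*hkdef
    have h40 : (0:ℝ) < 4*h^2 := by positivity
    nlinarith [h4]
  have hsum : R + k = h := by
    have : 2*h*(R + k - h) = 0 := by linear_combination hRdef + hkdef
    have h20 : (0:ℝ) < 2*h := by linarith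
    nlinarith [this]
  have hdiff : 4*h*(R - k) = 1 := by linear_combination 2*(hRdef - hkdef)
  by_cases hc : r0^2 + t^2 ≤ R^2
  · exact Or.inl hc
  right
  push_neg at hc
  have htk : k < t := by nlinarith
  by_cases htR : R ≤ t
  · have h1 : h - t ≤ k := by linarith
    have h2 : 0 ≤ h - t := by linarith
    nlinarith
  push_neg at htR
  have he0 : 0 < R - t := by linarith
  have heb : 4*h*(R-t) ≤ 1 := by nlinarith [mul_nonneg hh0.le (sub_nonneg.2 htk.le)]
  have ha5 : 2*h*(R-t) ≤ 1/2 := by linarith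
  have ha0 : 0 ≤ 2*h*(R-t) := by positivity
  have hE : (R+k) - 4*h^2*(R-k) = 0 := by linear_combination hsum - h*hdiff
  have hid4 : R^2 - t^2 - (2*h*(R-t))^2 = (R-t)*((4*h^2+1)*(t-k)) := by
    linear_combination (R-t)*hE
  have h1 : (2*h*(R-t))^2 ≤ R^2 - t^2 := by
    nlinarith [mul_nonneg he0.le (mul_nonneg (by positivity : (0:ℝ) ≤ 4*h^2+1)
      (sub_nonneg.2 htk.le))]
  have hra : 2*h*(R-t) ≤ r0 := le_of_pow_le_pow_left₀ two_ne_zero hr0 (by nlinarith)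
  have hid5 : (1/2 - 2*h*(R-t))^2 + (h-t)^2 - R^2 = (R-t)*((4*h^2+1)*(R-t) - 2*R) := by
    linear_combination (-1)*hRdef
  have hx : 4*h*((4*h^2+1)*(R-t) - 2*R) = (4*h^2+1)*(4*h*(R-t) - 1) := by
    linear_combination (-4)*hRdef
  have hx2 : 4*h*((4*h^2+1)*(R-t) - 2*R) ≤ 0 := by
    rw [hx]
    exact mul_nonpos_of_nonneg_of_nonpos (by positivity) (by linarith)
  have hneg : (4*h^2+1)*(R-t) - 2*R ≤ 0 := by nlinarith [hx2]
  have hfin : (1/2 - 2*h*(R-t))^2 + (h-t)^2 ≤ R^2 := by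
    have := mul_nonpos_of_nonneg_of_nonpos he0.le hneg
    linarith [hid5]
  have hmono : (1/2 - r0)^2 ≤ (1/2 - 2*h*(R-t))^2 := by
    nlinarith [mul_nonneg (sub_nonneg.2 hra) (by linarith : (0:ℝ) ≤ 1 - r0 - 2*h*(R-t))]
  linarith
lemma cover_real (pr v : ℝ) (l : ℤ) (hpl : pr = 2*(l:ℝ)+1) (hv : v ≠ 0)
    (hh : 3/4 ≤ v^2) (x y : ℝ) :
    ∃ a b : ℤ, (x - ((a:ℝ) + (b:ℝ)*(pr/2)))^2 + (y - (b:ℝ)*v)^2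
      ≤ ((v^2+1/4)/(2*|v|))^2 := by
  obtain ⟨b0, θ, hθ0, hθ1, hbθ⟩ : ∃ (b0 : ℤ) (θ : ℝ), 0 ≤ θ ∧ θ < 1 ∧ y - (b0:ℝ)*v = v*θ :=
    ⟨⌊y/v⌋, Int.fract (y/v), Int.fract_nonneg _, Int.fract_lt_one _, by
      rw [Int.fract]; field_simp⟩
  obtain ⟨a0, r, hrb, ha0r⟩ : ∃ (a0 : ℤ) (r : ℝ), |r| ≤ 1/2 ∧ x - (b0:ℝ)*(pr/2) - a0 = r :=
    ⟨round (x - (b0:ℝ)*(pr/2)), _, abs_sub_round _, rfl⟩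
  obtain ⟨h, hhd⟩ : ∃ h : ℝ, h = |v| := ⟨_, rfl⟩
  obtain ⟨t, htd⟩ : ∃ t : ℝ, t = h*θ := ⟨_, rfl⟩
  obtain ⟨R, hRd⟩ : ∃ R : ℝ, R = (v^2+1/4)/(2*|v|) := ⟨_, rfl⟩
  obtain ⟨k, hkd⟩ : ∃ k : ℝ, k = (v^2-1/4)/(2*|v|) := ⟨_, rfl⟩
  rw [← hRd]
  have hh0 : 0 < h := by rw [hhd]; exact abs_pos.2 hv
  have hsq : h^2 = v^2 := by rw [hhd]; exact _root_.sq_abs v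
  have hh34 : 3/4 ≤ h^2 := by rw [hsq]; exact hh
  have hRdef : 2*h*R = h^2 + 1/4 := by
    rw [hRd, hhd, _root_.sq_abs]
    field_simp
  have hkdef : 2*h*k = h^2 - 1/4 := by
    rw [hkd, hhd, _root_.sq_abs]
    field_simp
  have ht0 : 0 ≤ t := by rw [htd]; exact mul_nonneg hh0.le hθ0
  have hth : t ≤ h := by rw [htd]; nlinarith
  rcases cover_min_aux h t (|r|) R k hh0 hh34 hRdef hkdef ht0 hth (abs_nonneg r) hrb with
    hc | hc
  · refine ⟨a0, b0, ?_⟩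
    have e1 : x - ((a0:ℝ) + (b0:ℝ)*(pr/2)) = r := by linarith
    have e2 : (y - (b0:ℝ)*v)^2 = t^2 := by
      rw [hbθ, htd]; linear_combination (-θ^2) * hsq
    rw [e1, e2]
    have := _root_.sq_abs r
    linarith
  · have e2 : (y - ((b0+1:ℤ):ℝ)*v)^2 = (h - t)^2 := by
      push_cast
      have hy1 : y - ((b0:ℝ)+1)*v = v*(θ-1) := by linear_combination hbθ
      rw [hy1, htd]; linear_combination (-(θ-1)^2) * hsq
    by_cases hr0 : 0 ≤ r
    · refine ⟨a0 - l, b0 + 1, ?_⟩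
      have e1 : x - (((a0 - l : ℤ):ℝ) + ((b0+1:ℤ):ℝ)*(pr/2)) = r - 1/2 := by
        push_cast
        rw [hpl] at ha0r ⊢
        linarith
      rw [e1, e2]
      have g1 : (r - 1/2)^2 = (1/2 - |r|)^2 := by rw [_root_.abs_of_nonneg hr0]; ring
      rw [g1]; exact hc
    · push_neg at hr0
      refine ⟨a0 - l - 1, b0 + 1, ?_⟩
      have e1 : x - (((a0 - l - 1 : ℤ):ℝ) + ((b0+1:ℤ):ℝ)*(pr/2)) = r + 1/2 := by
        push_cast
        rw [hpl] at ha0r ⊢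
        linarith
      rw [e1, e2]
      have g1 : (r + 1/2)^2 = (1/2 - |r|)^2 := by rw [_root_.abs_of_neg hr0]; ring
      rw [g1]; exact hc
lemma cover_even (τ : ℂ) (him : τ.im ≠ 0) (z : ℂ) :
    ∃ w ∈ Ztau τ, ‖z - w‖ ≤ Real.sqrt (1 + τ.im^2) / 2 := by
  set b : ℤ := round (z.im / τ.im) with hb
  set a : ℤ := round (z.re - (b:ℝ) * τ.re) with ha
  refine ⟨(a:ℂ) + (b:ℂ) * τ, ⟨a, b, rfl⟩, ?_⟩
  have h1 : |z.re - (b:ℝ)*τ.re - a| ≤ 1/2 := abs_sub_round _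
  have h2 : |z.im/τ.im - b| ≤ 1/2 := abs_sub_round _
  have hre : (z - ((a:ℂ) + (b:ℂ)*τ)).re = z.re - (b:ℝ)*τ.re - a := by
    simp [Complex.sub_re, Complex.add_re, Complex.mul_re]; ring
  have him' : (z - ((a:ℂ) + (b:ℂ)*τ)).im = τ.im * (z.im/τ.im - b) := by
    simp [Complex.sub_im, Complex.add_im, Complex.mul_im]
    field_simp
  apply abs_le_of_sq (by positivity)
  rw [hre, him']
  have e1 : (z.re - (b:ℝ)*τ.re - a)^2 ≤ (1/2)^2 := by
    rw [← _root_.sq_abs]; exact pow_le_pow_left₀ (abs_nonneg _) h1 2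
  have e2 : (τ.im * (z.im/τ.im - b))^2 ≤ τ.im^2 * (1/2)^2 := by
    rw [mul_pow]
    have : (z.im/τ.im - b)^2 ≤ (1/2)^2 := by
      rw [← _root_.sq_abs]; exact pow_le_pow_left₀ (abs_nonneg _) h2 2
    nlinarith [sq_nonneg τ.im]
  have e3 : (Real.sqrt (1 + τ.im^2) / 2)^2 = (1 + τ.im^2)/4 := by
    rw [div_pow, Real.sq_sqrt (by positivity)]; ring
  rw [e3]; nlinarith
lemma cover_odd (p : ℤ) (τ : ℂ) (hpo : Odd p) (him : τ.im ≠ 0)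
    (hre : τ.re = (p:ℝ)/2) (hh : 3/4 ≤ τ.im^2) (z : ℂ) :
    ∃ w ∈ Ztau τ, ‖z - w‖ ≤ (τ.im^2 + 1/4)/(2*|τ.im|) := by
  obtain ⟨l, hl⟩ := hpo
  have hpl : (p:ℝ) = 2*(l:ℝ)+1 := by rw [hl]; push_cast; ring
  obtain ⟨a, b, hab⟩ := cover_real (p:ℝ) τ.im l hpl him hh z.re z.im
  refine ⟨(a:ℂ) + (b:ℂ)*τ, ⟨a, b, rfl⟩, ?_⟩
  have hR0 : (0:ℝ) ≤ (τ.im^2 + 1/4)/(2*|τ.im|) := by positivity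
  apply abs_le_of_sq hR0
  rw [sub_lattice_re, sub_lattice_im, hre]
  have e1 : z.re - (a:ℝ) - (b:ℝ)*((p:ℝ)/2) = z.re - ((a:ℝ) + (b:ℝ)*((p:ℝ)/2)) := by ring
  rw [e1]; exact hab
section main
variable {p q : ℤ} {τ : ℂ} {D : Set ℂ} {R : ℝ}
variable (hroot : τ ^ 2 - (p : ℂ) * τ + (q : ℂ) = 0) (him : τ.im ≠ 0)
variable (hre : τ.re = (p:ℝ)/2) (hns : Complex.normSq τ = (q:ℝ))
variable (hq2 : (2:ℝ) ≤ (q:ℝ))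
variable (hD : IsMinNormDigitSet τ 2 D)
variable (hcov : ∀ z : ℂ, ∃ w ∈ Ztau τ, ‖z - w‖ ≤ R)
variable (hR0 : 0 ≤ R)

lemma tau_ne_zero (him : τ.im ≠ 0) : τ ≠ 0 := fun h => him (by rw [h]; simp)

lemma abs_tau_sq (hns : Complex.normSq τ = (q:ℝ)) : ‖τ‖ ^ 2 = (q:ℝ) := by
  rw [Complex.sq_norm, hns]

lemma abs_tau_pow2 (hns : Complex.normSq τ = (q:ℝ)) :
    ‖τ^2‖ = (q:ℝ) := by
  rw [norm_pow, Complex.sq_norm, hns]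

include hns hcov hR0 him in
lemma digit_bound {x : ℂ} (hx : MinNormRep τ 2 x) : ‖x‖ ≤ (q:ℝ) * R := by
  obtain ⟨w, hw, hwle⟩ := hcov (x / τ^2)
  have ht0 : τ ≠ 0 := tau_ne_zero him
  have ht20 : τ^2 ≠ 0 := pow_ne_zero _ ht0
  have hq0 : (0:ℝ) ≤ (q:ℝ) := by
    rw [← hns]; exact Complex.normSq_nonneg τ
  calc ‖x‖ ≤ ‖x - τ^2 * w‖ := hx.2.2 w hw
    _ = ‖τ^2‖ * ‖x/τ^2 - w‖ := by
        rw [← norm_mul]; congr 1; field_simp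
    _ = (q:ℝ) * ‖x/τ^2 - w‖ := by rw [abs_tau_pow2 hns]
    _ ≤ (q:ℝ) * R := by
        exact mul_le_mul_of_nonneg_left hwle hq0

include hroot him hre hns hq2 hD in
lemma small_is_digit {z : ℂ} (hz : z ∈ Ztau τ) (hnd : ¬ TauDvd τ z)
    (hsmall : ‖z‖ < (q:ℝ)/2) : z ∈ D := by
  obtain ⟨d, ⟨hdD, y, hyZ, hzy⟩, -⟩ := hD.2.2.2 z hz hnd
  have hdne : d ≠ 0 := by
    rintro rfl
    exact hnd ⟨τ * y, ztau_tau_mul hroot hyZ, by linear_combination hzy⟩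
  have hmin : MinNormRep τ 2 d := hD.2.2.1 d hdD hdne
  have hdz : ‖d‖ ≤ ‖z‖ := by
    have h1 := hmin.2.2 (-y) (ztau_neg hyZ)
    have h2 : d - τ^2 * (-y) = z := by linear_combination -hzy
    rwa [h2] at h1
  by_cases hy0 : y = 0
  · rw [hy0] at hzy; simp at hzy
    have : z = d := by linear_combination hzy
    rwa [this]
  · exfalso
    have h1 : 1 ≤ ‖y‖ := one_le_abs_ztau p q τ hre hns hyZ hy0
    have h2 : ‖z - d‖ = (q:ℝ) * ‖y‖ := by
      rw [hzy, norm_mul, abs_tau_pow2 hns]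
    have h3 : ‖z - d‖ ≤ ‖z‖ + ‖d‖ := by
      calc ‖z - d‖ ≤ ‖z‖ + ‖-d‖ := by
            rw [sub_eq_add_neg]; exact norm_add_le _ _
        _ = ‖z‖ + ‖d‖ := by rw [norm_neg]
    have hq0 : (0:ℝ) < (q:ℝ) := by linarith
    nlinarith [h2, h3, hdz, h1]


include hroot hre hns hq2 in
lemma extract_tau_pow {z : ℂ} (hz : z ∈ Ztau τ) (hz0 : z ≠ 0) :
    ∃ (s : ℕ) (v : ℂ), v ∈ Ztau τ ∧ ¬ TauDvd τ v ∧ v ≠ 0 ∧ z = τ^s * v ∧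
      ‖v‖ ≤ ‖z‖ := by
  have hq0 : (0:ℝ) < (q:ℝ) := by linarith
  obtain ⟨n, hn⟩ := exists_nat_ge (‖z‖ ^ 2)
  induction n generalizing z with
  | zero =>
    exfalso
    have := one_le_abs_ztau p q τ hre hns hz hz0
    push_cast at hn
    nlinarith
  | succ n ih =>
    by_cases hdvd : TauDvd τ z
    · obtain ⟨y, hyZ, rfl⟩ := hdvd
      have hy0 : y ≠ 0 := by
        rintro rfl; exact hz0 (by ring)
      have h1 : 1 ≤ ‖y‖ := one_le_abs_ztau p q τ hre hns hyZ hy0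
      have habs : ‖τ * y‖ ^ 2 = (q:ℝ) * ‖y‖ ^ 2 := by
        rw [norm_mul, mul_pow, abs_tau_sq hns]
      have hyn : ‖y‖ ^ 2 ≤ n := by
        rcases Nat.eq_zero_or_pos n with rfl | hn1
        · exfalso; push_cast at hn; nlinarith
        · have : (1:ℝ) ≤ n := by exact_mod_cast hn1
          push_cast at hn ⊢
          nlinarith
      obtain ⟨s, v, hvZ, hvnd, hv0, hveq, hvle⟩ := ih hyZ hy0 hyn
      refine ⟨s+1, v, hvZ, hvnd, hv0, by rw [pow_succ]; rw [hveq]; ring, ?_⟩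
      have h2 : ‖y‖ ≤ ‖τ * y‖ := by
        have hsq1 : (1:ℝ) ≤ Real.sqrt q := by
          rw [show (1:ℝ) = Real.sqrt 1 by simp]
          exact Real.sqrt_le_sqrt (by linarith)
        have : ‖τ‖ = Real.sqrt q := by
          rw [Complex.norm_def, hns]
        rw [norm_mul, this]
        nlinarith [norm_nonneg y]
      linarith
    · exact ⟨0, z, hz, hdvd, hz0, by ring, le_refl _⟩

include hroot him hre hns hq2 hD hcov hR0 in
lemma two_digit_decomp {z : ℂ} (hz : z ∈ Ztau τ) (hz0 : z ≠ 0)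
    (hK : Real.sqrt q * R + 2*R < (q:ℝ)/2)
    (hbd : ‖z‖ ≤ (q:ℝ)*R*(1 + Real.sqrt q)) :
    ∃ (a b : ℕ) (e0 e1 : ℂ), e0 ∈ D ∧ e0 ≠ 0 ∧ e1 ∈ D ∧ a + 2 ≤ b ∧
      z = τ^a * e0 + τ^b * e1 := by
  have hq0 : (0:ℝ) < (q:ℝ) := by linarith
  obtain ⟨s, v, hvZ, hvnd, hv0, hveq, hvle⟩ := extract_tau_pow hroot hre hns hq2 hz hz0
  obtain ⟨e0, ⟨he0D, y, hyZ, hvy⟩, -⟩ := hD.2.2.2 v hvZ hvnd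
  have he0ne : e0 ≠ 0 := by
    rintro rfl
    exact hvnd ⟨τ * y, ztau_tau_mul hroot hyZ, by linear_combination hvy⟩
  have he0bd : ‖e0‖ ≤ (q:ℝ)*R :=
    digit_bound him hns hcov hR0 (hD.2.2.1 e0 he0D he0ne)
  by_cases hy0 : y = 0
  · refine ⟨s, s+2, e0, 0, he0D, he0ne, hD.2.1, by omega, ?_⟩
    rw [hy0] at hvy
    have : v = e0 := by linear_combination hvy
    rw [hveq, this]; ring
  · have hyb : ‖y‖ < (q:ℝ)/2 := by
      have h1 : ‖v - e0‖ = (q:ℝ) * ‖y‖ := by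
        rw [hvy, norm_mul, abs_tau_pow2 hns]
      have h2 : ‖v - e0‖ ≤ ‖v‖ + ‖e0‖ := by
        calc ‖v - e0‖ ≤ ‖v‖ + ‖-e0‖ := by
              rw [sub_eq_add_neg]; exact norm_add_le _ _
          _ = ‖v‖ + ‖e0‖ := by rw [norm_neg]
      have h3 : ‖v‖ ≤ (q:ℝ)*R*(1 + Real.sqrt q) := le_trans hvle hbd
      -- q * |y| ≤ qR(1+√q) + qR = q(2R + √q R) < q·q/2 → |y| < q/2?? careful:
      -- |y| ≤ (|v| + |e0|)/q ≤ (qR(1+√q) + qR)/q = 2R + √q R < q/2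
      nlinarith [h1, h2, h3, he0bd, hK]
    obtain ⟨k, v', hv'Z, hv'nd, hv'0, hv'eq, hv'le⟩ :=
      extract_tau_pow hroot hre hns hq2 hyZ hy0
    have hv'D : v' ∈ D := small_is_digit hroot him hre hns hq2 hD hv'Z hv'nd
      (lt_of_le_of_lt hv'le hyb)
    refine ⟨s, s+2+k, e0, v', he0D, he0ne, hv'D, by omega, ?_⟩
    rw [hveq]
    have hv2 : v = e0 + τ^2 * (τ^k * v') := by rw [← hv'eq]; linear_combination hvy
    rw [hv2, pow_add, pow_add]
    ring

end main
lemma mk2 (τ : ℂ) (D : Set ℂ) (h0 : (0:ℂ) ∈ D) {e0 e1 : ℂ} (he0 : e0 ∈ D) (he1 : e1 ∈ D)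
    {a b : ℕ} (hab : a + 2 ≤ b) :
    ∃ η : ℕ →₀ ℂ, IsExpansion D η ∧ IsWNAF 2 η ∧
      evalue τ η = τ^a * e0 + τ^b * e1 ∧ eweight η ≤ 2 := by
  classical
  have hne : a ≠ b := by omega
  refine ⟨Finsupp.single a e0 + Finsupp.single b e1, ?_, ?_, ?_, ?_⟩
  · intro n
    rw [Finsupp.add_apply, Finsupp.single_apply, Finsupp.single_apply]
    by_cases h1 : a = n
    · have h2 : ¬ (b = n) := by omega
      simpa [h1, h2] using he0
    · by_cases h2 : b = n
      · simpa [h1, h2] using he1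
      · simpa [h1, h2] using h0
  · intro m n hmn hm hn
    have hsupp : ∀ k : ℕ, (Finsupp.single a e0 + Finsupp.single b e1) k ≠ 0 →
        k = a ∨ k = b := by
      intro k hk
      by_contra hc
      push_neg at hc
      rw [Finsupp.add_apply, Finsupp.single_apply, Finsupp.single_apply,
        if_neg (fun h => hc.1 h.symm), if_neg (fun h => hc.2 h.symm)] at hk
      simp at hk
    have h2ab : (2:ℤ) ≤ |(a:ℤ) - (b:ℤ)| := by
      rw [le_abs]; right; push_cast; omega
    have h2ba : (2:ℤ) ≤ |(b:ℤ) - (a:ℤ)| := by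
      rw [le_abs]; left; push_cast; omega
    rcases hsupp m hm with rfl | rfl <;> rcases hsupp n hn with rfl | rfl
    · exact absurd rfl hmn
    · exact h2ab
    · exact h2ba
    · exact absurd rfl hmn
  · rw [evalue]
    rw [Finsupp.sum_add_index' (h := fun (n : ℕ) (d : ℂ) => d * τ ^ n)
      (fun n => by simp) (fun n b1 b2 => by ring)]
    rw [Finsupp.sum_single_index (by simp), Finsupp.sum_single_index (by simp)]
    ring
  · rw [eweight]
    have hsub : (Finsupp.single a e0 + Finsupp.single b e1).support ⊆ {a} ∪ {b} :=
      subset_trans Finsupp.support_add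
        (Finset.union_subset_union Finsupp.support_single_subset Finsupp.support_single_subset)
    calc (Finsupp.single a e0 + Finsupp.single b e1).support.card
        ≤ ({a} ∪ {b} : Finset ℕ).card := Finset.card_le_card hsub
      _ ≤ ({a} : Finset ℕ).card + ({b} : Finset ℕ).card := Finset.card_union_le _ _
      _ ≤ 2 := by simp

lemma mk0 (τ : ℂ) (D : Set ℂ) (h0 : (0:ℂ) ∈ D) :
    ∃ η : ℕ →₀ ℂ, IsExpansion D η ∧ IsWNAF 2 η ∧ evalue τ η = 0 ∧ eweight η ≤ 2 := by
  refine ⟨0, fun n => by simpa using h0, fun m n _ hm => by simp at hm, ?_, by simp [eweight]⟩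
  rw [evalue, Finsupp.sum_zero_index]
/-- For `w = 2`: under the stated inequality on `p` and `q`, the minimal norm
representatives digit set modulo `τ²` is `2`-subadditive. -/
theorem wsubadditive_w2 (p q : ℤ) (τ : ℂ)
    (hpq : p ^ 2 < 4 * q)
    (hroot : τ ^ 2 - (p : ℂ) * τ + (q : ℂ) = 0)
    (him : τ.im ≠ 0)
    (hcond :
      (Even p ∧
        (1 / Real.sqrt q + 2 / (q : ℝ)) ^ 2 * ((q : ℝ) - (p : ℝ) ^ 2 / 4 + 1) < 1)
      ∨
      (Odd p ∧
        (1 / Real.sqrt q + 2 / (q : ℝ)) ^ 2 *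
          ((q : ℝ) - (p : ℝ) ^ 2 / 4 + 1 / 4) ^ 2 *
          ((q : ℝ) - (p : ℝ) ^ 2 / 4)⁻¹ < 1))
    (D : Set ℂ) (hD : IsMinNormDigitSet τ 2 D) :
    WSubadditive τ 2 D := by
  classical
  have hre : τ.re = (p:ℝ)/2 := tau_re hroot him
  have him2 : τ.im^2 = (q:ℝ) - (p:ℝ)^2/4 := tau_im_sq hroot him
  have hns : Complex.normSq τ = (q:ℝ) := tau_normSq hroot him
  have hpq' : ((p:ℝ))^2 < 4*(q:ℝ) := by exact_mod_cast hpq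
  have hq0 : (0:ℝ) < (q:ℝ) := by nlinarith [sq_nonneg (p:ℝ)]
  have hsq0 : 0 < Real.sqrt q := Real.sqrt_pos.2 hq0
  have hsqq : Real.sqrt q * Real.sqrt q = (q:ℝ) := Real.mul_self_sqrt hq0.le
  have habs_tau : ‖τ‖ = Real.sqrt q := by rw [Complex.norm_def, hns]
  have hqB : (q:ℝ) * (1/Real.sqrt q + 2/(q:ℝ)) = Real.sqrt q + 2 := by
    field_simp
    nlinarith [hsqq]
  obtain ⟨R, hRhalf, hcov, hK⟩ :
      ∃ R : ℝ, 1/2 ≤ R ∧ (∀ z : ℂ, ∃ w ∈ Ztau τ, ‖z - w‖ ≤ R) ∧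
        Real.sqrt q * R + 2*R < (q:ℝ)/2 := by
    rcases hcond with ⟨hpe, hineq⟩ | ⟨hpo, hineq⟩
    · refine ⟨Real.sqrt (1 + τ.im^2)/2, ?_, cover_even τ him, ?_⟩
      · have h1 : (1:ℝ) ≤ 1 + τ.im^2 := by nlinarith [sq_nonneg τ.im]
        have h2 := Real.sqrt_le_sqrt h1
        rw [Real.sqrt_one] at h2
        linarith
      · have hA0 : (0:ℝ) < 1 + τ.im^2 := by positivity
        have hsA : Real.sqrt (1 + τ.im^2) ^ 2 = 1 + τ.im^2 := Real.sq_sqrt hA0.le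
        have he : (2*(Real.sqrt (1 + τ.im^2)/2) * (1/Real.sqrt q + 2/(q:ℝ)))^2
            = (1/Real.sqrt q + 2/(q:ℝ))^2 * ((q:ℝ) - (p:ℝ)^2/4 + 1) := by
          rw [mul_pow, mul_pow]
          rw [div_pow, hsA, him2]
          ring
        have hlt : (2*(Real.sqrt (1 + τ.im^2)/2) * (1/Real.sqrt q + 2/(q:ℝ)))^2 < 1 := by
          rw [he]; exact hineq
        have hx0 : 0 ≤ 2*(Real.sqrt (1 + τ.im^2)/2) * (1/Real.sqrt q + 2/(q:ℝ)) := by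
          positivity
        have hlt1 : 2*(Real.sqrt (1 + τ.im^2)/2) * (1/Real.sqrt q + 2/(q:ℝ)) < 1 := by
          nlinarith
        have hmul : (q:ℝ) * ((Real.sqrt (1 + τ.im^2)/2) * (1/Real.sqrt q + 2/(q:ℝ)))
            < (q:ℝ)/2 := by nlinarith
        calc Real.sqrt q * (Real.sqrt (1 + τ.im^2)/2) + 2*(Real.sqrt (1 + τ.im^2)/2)
            = (Real.sqrt q + 2) * (Real.sqrt (1 + τ.im^2)/2) := by ring
          _ = ((q:ℝ) * (1/Real.sqrt q + 2/(q:ℝ))) * (Real.sqrt (1 + τ.im^2)/2) := by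
              rw [hqB]
          _ = (q:ℝ) * ((Real.sqrt (1 + τ.im^2)/2) * (1/Real.sqrt q + 2/(q:ℝ))) := by ring
          _ < (q:ℝ)/2 := hmul
    · -- odd case
      have hH0 : (0:ℝ) < τ.im^2 := by
        rcases lt_or_gt_of_ne him with h | h <;> nlinarith
      have hh34 : (3:ℝ)/4 ≤ τ.im^2 := by
        obtain ⟨l, hl⟩ := hpo
        have hint : (3:ℤ) ≤ 4*q - p^2 := by
          have e : 4*q - p^2 = 4*(q - l*l - l) - 1 := by rw [hl]; ring
          have hpos : 0 < 4*q - p^2 := by linarith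
          omega
        have : (3:ℝ) ≤ 4*(q:ℝ) - (p:ℝ)^2 := by exact_mod_cast hint
        nlinarith [him2]
      have habs0 : (0:ℝ) < |τ.im| := abs_pos.2 him
      have habs2 : |τ.im|^2 = τ.im^2 := _root_.sq_abs τ.im
      refine ⟨(τ.im^2 + 1/4)/(2*|τ.im|), ?_, cover_odd p τ hpo him hre hh34, ?_⟩
      · rw [le_div_iff₀ (by positivity)]
        nlinarith [sq_nonneg (|τ.im| - 1/2)]
      · have he : (2*((τ.im^2 + 1/4)/(2*|τ.im|)) * (1/Real.sqrt q + 2/(q:ℝ)))^2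
            = (1/Real.sqrt q + 2/(q:ℝ))^2 * ((q:ℝ) - (p:ℝ)^2/4 + 1/4)^2
              * ((q:ℝ) - (p:ℝ)^2/4)⁻¹ := by
          rw [← him2]
          rw [mul_pow, mul_pow, div_pow]
          rw [mul_pow]
          field_simp
          rw [habs2]
        have hlt : (2*((τ.im^2 + 1/4)/(2*|τ.im|)) * (1/Real.sqrt q + 2/(q:ℝ)))^2 < 1 := by
          rw [he]; exact hineq
        have hx0 : 0 ≤ 2*((τ.im^2 + 1/4)/(2*|τ.im|)) * (1/Real.sqrt q + 2/(q:ℝ)) := by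
          positivity
        have hlt1 : 2*((τ.im^2 + 1/4)/(2*|τ.im|)) * (1/Real.sqrt q + 2/(q:ℝ)) < 1 := by
          nlinarith
        have hmul : (q:ℝ) * (((τ.im^2 + 1/4)/(2*|τ.im|)) * (1/Real.sqrt q + 2/(q:ℝ)))
            < (q:ℝ)/2 := by nlinarith
        calc Real.sqrt q * ((τ.im^2 + 1/4)/(2*|τ.im|)) + 2*((τ.im^2 + 1/4)/(2*|τ.im|))
            = (Real.sqrt q + 2) * ((τ.im^2 + 1/4)/(2*|τ.im|)) := by ring
          _ = ((q:ℝ) * (1/Real.sqrt q + 2/(q:ℝ))) * ((τ.im^2 + 1/4)/(2*|τ.im|)) := by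
              rw [hqB]
          _ = (q:ℝ) * (((τ.im^2 + 1/4)/(2*|τ.im|)) * (1/Real.sqrt q + 2/(q:ℝ))) := by ring
          _ < (q:ℝ)/2 := hmul
  have hq2 : (2:ℝ) ≤ (q:ℝ) := by nlinarith [Real.sqrt_nonneg (q:ℝ)]
  have hRnn : (0:ℝ) ≤ R := by linarith
  have hsq1 : (1:ℝ) ≤ Real.sqrt q := by nlinarith
  -- key asymmetric lemma
  have key : ∀ c ∈ D, ∀ d ∈ D, c ≠ 0 → d ≠ 0 → ∀ m n : ℕ, m ≤ n →
      ∃ η : ℕ →₀ ℂ, IsExpansion D η ∧ IsWNAF 2 η ∧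
        evalue τ η = τ ^ m * c + τ ^ n * d ∧ eweight η ≤ 2 := by
    intro c hc d hd hc0 hd0 m n hmn
    have hcZ : c ∈ Ztau τ := hD.1 hc
    have hdZ : d ∈ Ztau τ := hD.1 hd
    have hcmin : MinNormRep τ 2 c := hD.2.2.1 c hc hc0
    have hcnd : ¬ TauDvd τ c := hcmin.2.1
    have hcb : ‖c‖ ≤ (q:ℝ)*R := digit_bound him hns hcov hRnn hcmin
    have hdb : ‖d‖ ≤ (q:ℝ)*R := digit_bound him hns hcov hRnn (hD.2.2.1 d hd hd0)
    rcases Nat.lt_or_ge n (m+2) with hlt | hge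
    · rcases Nat.lt_or_ge n (m+1) with hlt1 | hge1
      · -- n = m
        have hnm : n = m := by omega
        subst hnm
        by_cases hz0 : c + d = 0
        · obtain ⟨η, h1, h2, h3, h4⟩ := mk0 τ D hD.2.1
          refine ⟨η, h1, h2, ?_, h4⟩
          rw [h3]
          linear_combination (-(τ^n) : ℂ) * hz0
        · have hzZ : c + d ∈ Ztau τ := ztau_add hcZ hdZ
          have hbd : ‖c + d‖ ≤ (q:ℝ)*R*(1 + Real.sqrt q) := by
            have h5 := norm_add_le c d
            nlinarith [h5, hcb, hdb,
              mul_nonneg (mul_nonneg hq0.le hRnn) (sub_nonneg.2 hsq1)]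
          obtain ⟨a, b, e0, e1, he0D, he0ne, he1D, hab, heq⟩ :=
            two_digit_decomp hroot him hre hns hq2 hD hcov hRnn hzZ hz0 hK hbd
          obtain ⟨η, h1, h2, h3, h4⟩ := mk2 τ D hD.2.1 he0D he1D
            (show (n+a) + 2 ≤ n+b by omega)
          refine ⟨η, h1, h2, ?_, h4⟩
          rw [h3]
          linear_combination (-(τ^n) : ℂ) * heq
      · -- n = m + 1
        have hnm : n = m + 1 := by omega
        subst hnm
        have hzZ : c + τ*d ∈ Ztau τ := ztau_add hcZ (ztau_tau_mul hroot hdZ)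
        have hznd : ¬ TauDvd τ (c + τ*d) := by
          rintro ⟨y, hyZ, hy⟩
          exact hcnd ⟨y - d, ztau_sub hyZ hdZ, by linear_combination hy⟩
        have hz0 : c + τ*d ≠ 0 := by
          intro h
          exact hznd (h ▸ taudvd_zero)
        have hbd : ‖c + τ*d‖ ≤ (q:ℝ)*R*(1 + Real.sqrt q) := by
          have h1 := norm_add_le c (τ*d)
          have h2 : ‖τ*d‖ = Real.sqrt q * ‖d‖ := by
            rw [norm_mul, habs_tau]
          nlinarith [norm_nonneg d]
        obtain ⟨a, b, e0, e1, he0D, he0ne, he1D, hab, heq⟩ :=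
          two_digit_decomp hroot him hre hns hq2 hD hcov hRnn hzZ hz0 hK hbd
        obtain ⟨η, h1, h2, h3, h4⟩ := mk2 τ D hD.2.1 he0D he1D
          (show (m+a) + 2 ≤ m+b by omega)
        refine ⟨η, h1, h2, ?_, h4⟩
        rw [h3]
        linear_combination (-(τ^m) : ℂ) * heq
    · -- n ≥ m + 2
      obtain ⟨η, h1, h2, h3, h4⟩ := mk2 τ D hD.2.1 hc hd (show m + 2 ≤ n from hge)
      exact ⟨η, h1, h2, h3, h4⟩
  intro c hc d hd hc0 hd0 m n
  rcases le_total m n with h | h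
  · exact key c hc d hd hc0 hd0 m n h
  · obtain ⟨η, h1, h2, h3, h4⟩ := key d hd c hc hd0 hc0 n m h
    exact ⟨η, h1, h2, by rw [h3]; ring, h4⟩
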